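/- (Necessity part of Theorem 1, combined with Proposition 1.) For every optimal solution (ℓ*, d*) of problem (P2.1) there exist real numbers ν_1 ≤ ν_2 ≤ … ≤ ν_N such that for every i ∈ {1,…,N}: ℓ*_i = τ·√(η h · max(ν_i, 0)/(3 ζ C³)) and d*_i = τ B · log₂( max( ν_i · B η h g/(σ² ln 2), 1 ) ), and such that for every i ∈ {1,…,N−1} with ν_i < ν_{i+1} the task-causality constraint at slot i is tight: Σ_{j=1}^i (ℓ*_j + d*_j) = Σ_{j=1}^i A_j. -/

import Mathlib

open Finset

/-- Local-computing energy: `E_loc(x) = ζ C³ x³ / τ²`. -/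
noncomputable def Eloc (ζ C τ x : ℝ) : ℝ := ζ * C ^ 3 * x ^ 3 / τ ^ 2

/-- Offloading energy: `E_off(x) = (τσ²/g)(2^{x/(τB)} − 1)`. -/
noncomputable def Eoff (τ σ2 g B x : ℝ) : ℝ := τ * σ2 / g * ((2 : ℝ) ^ (x / (τ * B)) - 1)

/-- Feasibility for problem (P2.1): nonnegativity, task causality, task completion. -/
def FeasP21 (N : ℕ) (A ℓ d : ℕ → ℝ) : Prop :=
  (∀ i ∈ Finset.Icc 1 N, 0 ≤ ℓ i ∧ 0 ≤ d i) ∧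
  (∀ i ∈ Finset.Icc 1 (N - 1),
    ∑ j ∈ Finset.Icc 1 i, (ℓ j + d j) ≤ ∑ j ∈ Finset.Icc 1 i, A j) ∧
  ∑ j ∈ Finset.Icc 1 N, (ℓ j + d j) = ∑ j ∈ Finset.Icc 1 N, A j

lemma sum_congr_except (s : Finset ℕ) (i : ℕ) (hi : i ∈ s) (G G' : ℕ → ℝ)
    (h : ∀ j ∈ s, j ≠ i → G' j = G j) :
    ∑ j ∈ s, G' j = ∑ j ∈ s, G j + (G' i - G i) := by
  classical
  rw [← Finset.add_sum_erase s G' hi, ← Finset.add_sum_erase s G hi,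
    Finset.sum_congr rfl (fun j hj => h j (Finset.mem_of_mem_erase hj) (Finset.ne_of_mem_erase hj))]
  ring

lemma sum_congr_except2 (s : Finset ℕ) (i₁ i₂ : ℕ) (h₁ : i₁ ∈ s) (h₂ : i₂ ∈ s)
    (hne : i₁ ≠ i₂) (G G' : ℕ → ℝ)
    (h : ∀ j ∈ s, j ≠ i₁ → j ≠ i₂ → G' j = G j) :
    ∑ j ∈ s, G' j = ∑ j ∈ s, G j + (G' i₁ - G i₁) + (G' i₂ - G i₂) := by
  classical
  have h₂' : i₂ ∈ s.erase i₁ := Finset.mem_erase.2 ⟨Ne.symm hne, h₂⟩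
  rw [← Finset.add_sum_erase s G' h₁, ← Finset.add_sum_erase s G h₁,
    sum_congr_except (s.erase i₁) i₂ h₂' G G'
      (fun j hj hji₂ => h j (Finset.mem_of_mem_erase hj) (Finset.ne_of_mem_erase hj) hji₂)]
  ring

lemma exists_pos_lt_of_deriv_neg (φ : ℝ → ℝ) (m : ℝ) (hφ : HasDerivAt φ m 0)
    (hm : m < 0) (b : ℝ) (hb : 0 < b) :
    ∃ ε : ℝ, 0 < ε ∧ ε ≤ b ∧ φ ε < φ 0 := by
  rw [hasDerivAt_iff_tendsto_slope] at hφ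
  have h2 : Filter.Tendsto (slope φ 0) (nhdsWithin 0 (Set.Ioi 0)) (nhds m) :=
    hφ.mono_left (nhdsWithin_mono 0 (fun x hx => ne_of_gt hx))
  have h3 : ∀ᶠ x in nhdsWithin (0:ℝ) (Set.Ioi 0), slope φ 0 x < 0 :=
    h2.eventually_lt_const hm
  have h4 : Set.Ioo (0:ℝ) b ∈ nhdsWithin (0:ℝ) (Set.Ioi 0) := Ioo_mem_nhdsGT hb
  obtain ⟨x, hx1, hx2⟩ :=
    (h3.and (Filter.eventually_iff_exists_mem.2 ⟨_, h4, fun y hy => hy⟩)).exists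
  refine ⟨x, hx2.1, le_of_lt hx2.2, ?_⟩
  rw [slope_def_field] at hx1
  have hxpos : (0:ℝ) < x - 0 := by simpa using hx2.1
  have := mul_neg_of_neg_of_pos hx1 hxpos
  rw [div_mul_cancel₀ _ (ne_of_gt hxpos)] at this
  linarith

set_option maxHeartbeats 2000000 in
/-- Necessity part of Theorem 1 (with Proposition 1): every optimal solution of (P2.1)
is of the stated closed form for some nondecreasing computation levels `ν`, and the
task-causality constraint is tight at every slot where `ν` strictly increases. -/
theorem stmt_3
    (N : ℕ) (hN : 0 < N)
    (τ η h g ζ C σ2 B : ℝ)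
    (hτ : 0 < τ) (hη : 0 < η) (hh : 0 < h) (hg : 0 < g)
    (hζ : 0 < ζ) (hC : 0 < C) (hσ2 : 0 < σ2) (hB : 0 < B)
    (A : ℕ → ℝ) (hA : ∀ i ∈ Finset.Icc 1 N, 0 ≤ A i)
    (ℓ d : ℕ → ℝ)
    (hfeas : FeasP21 N A ℓ d)
    (hopt : ∀ ℓ' d' : ℕ → ℝ, FeasP21 N A ℓ' d' →
      ∑ i ∈ Finset.Icc 1 N, 1 / (η * h) * (Eloc ζ C τ (ℓ i) + Eoff τ σ2 g B (d i))
        ≤ ∑ i ∈ Finset.Icc 1 N, 1 / (η * h) * (Eloc ζ C τ (ℓ' i) + Eoff τ σ2 g B (d' i))) :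
    ∃ ν : ℕ → ℝ,
      (∀ i ∈ Finset.Icc 1 (N - 1), ν i ≤ ν (i + 1)) ∧
      (∀ i ∈ Finset.Icc 1 N,
        ℓ i = τ * Real.sqrt (η * h * max (ν i) 0 / (3 * ζ * C ^ 3)) ∧
        d i = τ * B * Real.logb 2 (max (ν i * (B * η * h * g) / (σ2 * Real.log 2)) 1)) ∧
      (∀ i ∈ Finset.Icc 1 (N - 1), ν i < ν (i + 1) →
        ∑ j ∈ Finset.Icc 1 i, (ℓ j + d j) = ∑ j ∈ Finset.Icc 1 i, A j) := by
  classical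
  obtain ⟨hnn, hcaus, hcomp⟩ := hfeas
  have hηh : 0 < η * h := mul_pos hη hh
  have hlog2 : 0 < Real.log 2 := Real.log_pos one_lt_two
  have hinv : 0 < 1 / (η * h) := by positivity
  -- cost functional
  set T : (ℕ → ℝ) → (ℕ → ℝ) → ℝ := fun u v =>
    ∑ i ∈ Finset.Icc 1 N, 1 / (η * h) * (Eloc ζ C τ (u i) + Eoff τ σ2 g B (v i)) with hT
  -- Key within-slot inequality.
  have key1 : ∀ i ∈ Finset.Icc 1 N, ∀ ε : ℝ, 0 ≤ ℓ i - ε → 0 ≤ d i + ε →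
      Eloc ζ C τ (ℓ i) + Eoff τ σ2 g B (d i)
        ≤ Eloc ζ C τ (ℓ i - ε) + Eoff τ σ2 g B (d i + ε) := by
    intro i hi ε h1 h2
    set L := Function.update ℓ i (ℓ i - ε) with hL
    set D := Function.update d i (d i + ε) with hD
    have hsum : ∀ j, L j + D j = ℓ j + d j := by
      intro j
      by_cases hj : j = i
      · subst hj; simp only [hL, hD, Function.update_self]; ring
      · simp [hL, hD, Function.update_of_ne hj]
    have hfeas' : FeasP21 N A L D := by
      refine ⟨?_, ?_, ?_⟩
      · intro j hj
        by_cases hji : j = i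
        · subst hji; simp only [hL, hD, Function.update_self]; exact ⟨h1, h2⟩
        · simp only [hL, hD, Function.update_of_ne hji]; exact hnn j hj
      · intro j hj
        calc ∑ k ∈ Finset.Icc 1 j, (L k + D k) = ∑ k ∈ Finset.Icc 1 j, (ℓ k + d k) :=
              Finset.sum_congr rfl (fun k _ => hsum k)
          _ ≤ ∑ k ∈ Finset.Icc 1 j, A k := hcaus j hj
      · calc ∑ k ∈ Finset.Icc 1 N, (L k + D k) = ∑ k ∈ Finset.Icc 1 N, (ℓ k + d k) :=
              Finset.sum_congr rfl (fun k _ => hsum k)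
          _ = ∑ k ∈ Finset.Icc 1 N, A k := hcomp
    have hle := hopt L D hfeas'
    have heq : T L D = T ℓ d +
        (1 / (η * h) * (Eloc ζ C τ (ℓ i - ε) + Eoff τ σ2 g B (d i + ε))
          - 1 / (η * h) * (Eloc ζ C τ (ℓ i) + Eoff τ σ2 g B (d i))) := by
      have := sum_congr_except (Finset.Icc 1 N) i hi
        (fun j => 1 / (η * h) * (Eloc ζ C τ (ℓ j) + Eoff τ σ2 g B (d j)))
        (fun j => 1 / (η * h) * (Eloc ζ C τ (L j) + Eoff τ σ2 g B (D j)))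
        (fun j _ hji => by simp [hL, hD, Function.update_of_ne hji])
      simpa [hT, hL, hD] using this
    have hle' : T ℓ d ≤ T L D := hle
    rw [heq] at hle'
    have h5 : 1 / (η * h) * (Eloc ζ C τ (ℓ i) + Eoff τ σ2 g B (d i))
        ≤ 1 / (η * h) * (Eloc ζ C τ (ℓ i - ε) + Eoff τ σ2 g B (d i + ε)) := by linarith
    exact (mul_le_mul_iff_right₀ hinv).mp h5
  -- Key between-slot inequality.
  have key2 : ∀ i ∈ Finset.Icc 1 (N - 1), ∀ ε : ℝ, 0 ≤ ℓ i + ε → 0 ≤ ℓ (i + 1) - ε →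
      (∑ j ∈ Finset.Icc 1 i, (ℓ j + d j)) + ε ≤ ∑ j ∈ Finset.Icc 1 i, A j →
      Eloc ζ C τ (ℓ i) + Eloc ζ C τ (ℓ (i + 1))
        ≤ Eloc ζ C τ (ℓ i + ε) + Eloc ζ C τ (ℓ (i + 1) - ε) := by
    intro i hi ε h1 h2 hslack
    rw [Finset.mem_Icc] at hi
    have hiN : i ∈ Finset.Icc 1 N := Finset.mem_Icc.2 ⟨hi.1, by omega⟩
    have hi1N : i + 1 ∈ Finset.Icc 1 N := Finset.mem_Icc.2 ⟨by omega, by omega⟩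
    have hne : i ≠ i + 1 := by omega
    set L := Function.update (Function.update ℓ i (ℓ i + ε)) (i + 1) (ℓ (i + 1) - ε) with hL
    have hLi : L i = ℓ i + ε := by
      rw [hL, Function.update_of_ne hne, Function.update_self]
    have hLi1 : L (i + 1) = ℓ (i + 1) - ε := by rw [hL, Function.update_self]
    have hLo : ∀ j, j ≠ i → j ≠ i + 1 → L j = ℓ j := by
      intro j hj1 hj2
      rw [hL, Function.update_of_ne hj2, Function.update_of_ne hj1]
    -- partial sums
    have hps : ∀ k : ℕ, ∑ j ∈ Finset.Icc 1 k, (L j + d j)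
        = (∑ j ∈ Finset.Icc 1 k, (ℓ j + d j))
          + (if i ∈ Finset.Icc 1 k then ε else 0)
          + (if i + 1 ∈ Finset.Icc 1 k then -ε else 0) := by
      intro k
      by_cases hik : i ∈ Finset.Icc 1 k
      · by_cases hik1 : i + 1 ∈ Finset.Icc 1 k
        · rw [if_pos hik, if_pos hik1]
          rw [sum_congr_except2 (Finset.Icc 1 k) i (i+1) hik hik1 hne
            (fun j => ℓ j + d j) (fun j => L j + d j)
            (fun j _ hj1 hj2 => by simp only [hLo j hj1 hj2])]
          rw [hLi, hLi1]; ring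
        · rw [if_pos hik, if_neg hik1, sum_congr_except (Finset.Icc 1 k) i hik
            (fun j => ℓ j + d j) (fun j => L j + d j)
            (fun j hj hj1 => by
              simp only [hLo j hj1 (by rintro rfl; exact hik1 hj)])]
          rw [hLi]; ring
      · have hik1 : i + 1 ∉ Finset.Icc 1 k := by
          rw [Finset.mem_Icc] at hik ⊢; omega
        rw [if_neg hik, if_neg hik1]
        have hcongr : ∑ j ∈ Finset.Icc 1 k, (L j + d j) = ∑ j ∈ Finset.Icc 1 k, (ℓ j + d j) :=
          Finset.sum_congr rfl (fun j hj => by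
            rw [hLo j (by rintro rfl; exact hik hj) (by rintro rfl; exact hik1 hj)])
        rw [hcongr]; ring
    have hfeas' : FeasP21 N A L d := by
      refine ⟨?_, ?_, ?_⟩
      · intro j hj
        by_cases hj1 : j = i
        · subst hj1; rw [hLi]; exact ⟨h1, (hnn _ hj).2⟩
        · by_cases hj2 : j = i + 1
          · subst hj2; rw [hLi1]; exact ⟨h2, (hnn _ hj).2⟩
          · rw [hLo j hj1 hj2]; exact hnn j hj
      · intro k hk
        rw [hps k]
        by_cases hik : i ∈ Finset.Icc 1 k
        · by_cases hik1 : i + 1 ∈ Finset.Icc 1 k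
          · rw [if_pos hik, if_pos hik1]
            have := hcaus k hk; linarith
          · rw [if_pos hik, if_neg hik1]
            rw [Finset.mem_Icc] at hik hik1 hk
            have hki : k = i := by omega
            subst hki
            simpa using hslack
        · have hik1 : i + 1 ∉ Finset.Icc 1 k := by
            rw [Finset.mem_Icc] at hik ⊢; omega
          rw [if_neg hik, if_neg hik1]
          have := hcaus k hk; linarith
      · rw [hps N, if_pos hiN, if_pos hi1N, hcomp]; ring
    have hle : T ℓ d ≤ T L d := hopt L d hfeas'
    have heq : T L d = T ℓ d +
        (1 / (η * h) * (Eloc ζ C τ (ℓ i + ε) + Eoff τ σ2 g B (d i))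
          - 1 / (η * h) * (Eloc ζ C τ (ℓ i) + Eoff τ σ2 g B (d i)))
        + (1 / (η * h) * (Eloc ζ C τ (ℓ (i + 1) - ε) + Eoff τ σ2 g B (d (i + 1)))
          - 1 / (η * h) * (Eloc ζ C τ (ℓ (i + 1)) + Eoff τ σ2 g B (d (i + 1)))) := by
      have := sum_congr_except2 (Finset.Icc 1 N) i (i + 1) hiN hi1N hne
        (fun j => 1 / (η * h) * (Eloc ζ C τ (ℓ j) + Eoff τ σ2 g B (d j)))
        (fun j => 1 / (η * h) * (Eloc ζ C τ (L j) + Eoff τ σ2 g B (d j)))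
        (fun j _ hj1 hj2 => by simp only [hLo j hj1 hj2])
      simp only [hLi, hLi1] at this
      simpa [hT] using this
    rw [heq] at hle
    have h5 : 1 / (η * h) * (Eloc ζ C τ (ℓ i) + Eloc ζ C τ (ℓ (i + 1)))
        ≤ 1 / (η * h) * (Eloc ζ C τ (ℓ i + ε) + Eloc ζ C τ (ℓ (i + 1) - ε)) := by
      ring_nf at hle ⊢
      linarith
    exact (mul_le_mul_iff_right₀ hinv).mp h5
  -- abbreviations for marginal costs
  set fd : ℕ → ℝ := fun i => 3 * ζ * C ^ 3 * (ℓ i) ^ 2 / τ ^ 2 with hfd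
  set gd : ℕ → ℝ := fun i => σ2 * Real.log 2 / (g * B) * (2:ℝ) ^ (d i / (τ * B)) with hgd
  have hgdpos : ∀ i, 0 < gd i := by
    intro i
    have : (0:ℝ) < (2:ℝ) ^ (d i / (τ * B)) := Real.rpow_pos_of_pos two_pos _
    rw [hgd]; positivity
  -- star1 : fd i ≤ gd i for all i
  have star1 : ∀ i ∈ Finset.Icc 1 N, fd i ≤ gd i := by
    intro i hi
    by_contra hcon
    push_neg at hcon
    have hli : 0 < ℓ i := by
      rcases lt_or_eq_of_le (hnn i hi).1 with hpos | hzero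
      · exact hpos
      · exfalso
        have : fd i = 0 := by rw [hfd]; simp [← hzero]
        rw [this] at hcon
        exact absurd hcon (not_lt.2 (le_of_lt (hgdpos i)))
    -- φ ε = Eloc (ℓ i - ε) + Eoff (d i + ε), derivative gd i - fd i < 0
    have hder : HasDerivAt (fun ε => Eloc ζ C τ (ℓ i - ε) + Eoff τ σ2 g B (d i + ε))
        (-(fd i) + gd i) 0 := by
      have h1 : HasDerivAt (fun ε : ℝ => ζ * C ^ 3 * (ℓ i - ε) ^ 3 / τ ^ 2)
          (ζ * C ^ 3 * ((3:ℕ) * (ℓ i - 0) ^ (3-1) * (-1)) / τ ^ 2) 0 :=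
        ((((hasDerivAt_id (0:ℝ)).const_sub (ℓ i)).pow 3).const_mul (ζ * C ^ 3)).div_const (τ ^ 2)
      have h2' : HasDerivAt (fun ε : ℝ => (d i + ε) / (τ * B)) (1 / (τ * B)) 0 := by
        simpa using (((hasDerivAt_id (0:ℝ)).const_add (d i)).div_const (τ * B))
      have h2 : HasDerivAt (fun ε : ℝ => τ * σ2 / g * ((2:ℝ) ^ ((d i + ε) / (τ * B)) - 1))
          (τ * σ2 / g * ((2:ℝ) ^ ((d i + 0) / (τ * B)) * Real.log 2 * (1 / (τ * B)))) 0 :=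
        (((Real.hasStrictDerivAt_const_rpow (by norm_num : (0:ℝ) < 2)
          ((d i + 0) / (τ * B))).hasDerivAt.comp 0 h2').sub_const 1).const_mul (τ * σ2 / g)
      have hsum := h1.add h2
      have heq : ζ * C ^ 3 * ((3:ℕ) * (ℓ i - 0) ^ (3-1) * (-1)) / τ ^ 2
          + τ * σ2 / g * ((2:ℝ) ^ ((d i + 0) / (τ * B)) * Real.log 2 * (1 / (τ * B)))
          = -(fd i) + gd i := by
        rw [hfd, hgd]
        rw [add_zero, sub_zero]
        push_cast
        field_simp
      rw [heq] at hsum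
      exact hsum
    have hmneg : -(fd i) + gd i < 0 := by linarith
    obtain ⟨ε, hε1, hε2, hε3⟩ := exists_pos_lt_of_deriv_neg _ _ hder hmneg (ℓ i) hli
    have := key1 i hi ε (by linarith) (by have := (hnn i hi).2; linarith)
    simp only [sub_zero, add_zero] at hε3
    linarith
  -- star2 : 0 < d i → gd i ≤ fd i
  have star2 : ∀ i ∈ Finset.Icc 1 N, 0 < d i → gd i ≤ fd i := by
    intro i hi hdi
    by_contra hcon
    push_neg at hcon
    -- φ ε = Eloc (ℓ i + ε) + Eoff (d i - ε), derivative fd i - gd i < 0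
    have hder : HasDerivAt (fun ε => Eloc ζ C τ (ℓ i + ε) + Eoff τ σ2 g B (d i - ε))
        (fd i + -(gd i)) 0 := by
      have h1 : HasDerivAt (fun ε : ℝ => ζ * C ^ 3 * (ℓ i + ε) ^ 3 / τ ^ 2)
          (ζ * C ^ 3 * ((3:ℕ) * (ℓ i + 0) ^ (3-1) * 1) / τ ^ 2) 0 :=
        ((((hasDerivAt_id (0:ℝ)).const_add (ℓ i)).pow 3).const_mul (ζ * C ^ 3)).div_const (τ ^ 2)
      have h2' : HasDerivAt (fun ε : ℝ => (d i - ε) / (τ * B)) (-1 / (τ * B)) 0 := by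
        simpa using (((hasDerivAt_id (0:ℝ)).const_sub (d i)).div_const (τ * B))
      have h2 : HasDerivAt (fun ε : ℝ => τ * σ2 / g * ((2:ℝ) ^ ((d i - ε) / (τ * B)) - 1))
          (τ * σ2 / g * ((2:ℝ) ^ ((d i - 0) / (τ * B)) * Real.log 2 * (-1 / (τ * B)))) 0 :=
        (((Real.hasStrictDerivAt_const_rpow (by norm_num : (0:ℝ) < 2)
          ((d i - 0) / (τ * B))).hasDerivAt.comp 0 h2').sub_const 1).const_mul (τ * σ2 / g)
      have hsum := h1.add h2
      have heq : ζ * C ^ 3 * ((3:ℕ) * (ℓ i + 0) ^ (3-1) * 1) / τ ^ 2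
          + τ * σ2 / g * ((2:ℝ) ^ ((d i - 0) / (τ * B)) * Real.log 2 * (-1 / (τ * B)))
          = fd i + -(gd i) := by
        rw [hfd, hgd]
        rw [add_zero, sub_zero]
        push_cast
        field_simp
      rw [heq] at hsum
      exact hsum
    have hmneg : fd i + -(gd i) < 0 := by linarith
    obtain ⟨ε, hε1, hε2, hε3⟩ := exists_pos_lt_of_deriv_neg _ _ hder hmneg (d i) hdi
    have := key1 i hi (-ε) (by have := (hnn i hi).1; linarith) (by linarith)
    simp only [sub_zero, add_zero, sub_neg_eq_add, ← sub_eq_add_neg] at this hε3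
    linarith
  -- monotonicity of ℓ on slots
  have hmono : ∀ i ∈ Finset.Icc 1 (N - 1), ℓ i ≤ ℓ (i + 1) := by
    intro i hi
    by_contra hcon
    push_neg at hcon
    rw [Finset.mem_Icc] at hi
    have hiN : i ∈ Finset.Icc 1 N := Finset.mem_Icc.2 ⟨hi.1, by omega⟩
    have hi1N : i + 1 ∈ Finset.Icc 1 N := Finset.mem_Icc.2 ⟨by omega, by omega⟩
    set a := ℓ (i + 1) with ha
    set b := ℓ i with hb
    have ha0 : 0 ≤ a := (hnn _ hi1N).1
    have hε : (0:ℝ) < (b - a) / 2 := by linarith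
    have hk := key2 i (Finset.mem_Icc.2 hi) (-((b - a) / 2))
      (by rw [← hb]; linarith) (by rw [← ha]; linarith)
      (by have := hcaus i (Finset.mem_Icc.2 hi); linarith)
    rw [← hb, ← ha] at hk
    have hblt : b + -((b - a) / 2) = (a + b) / 2 := by ring
    have halt : a - -((b - a) / 2) = (a + b) / 2 := by ring
    rw [hblt, halt] at hk
    -- hk : Eloc b + Eloc a ≤ 2 * Eloc ((a+b)/2), contradiction with strict convexity
    have hkey : b ^ 3 + a ^ 3 ≤ ((a + b) / 2) ^ 3 + ((a + b) / 2) ^ 3 := by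
      have hc : (0:ℝ) < ζ * C ^ 3 / τ ^ 2 := by positivity
      have : ζ * C ^ 3 / τ ^ 2 * (b ^ 3 + a ^ 3)
          ≤ ζ * C ^ 3 / τ ^ 2 * (((a + b) / 2) ^ 3 + ((a + b) / 2) ^ 3) := by
        simp only [Eloc] at hk
        ring_nf at hk ⊢
        linarith
      exact (mul_le_mul_iff_right₀ hc).mp this
    have hab : 0 < a + b := by linarith
    have hsq : 0 < (a - b) ^ 2 := by nlinarith
    nlinarith [mul_pos hab hsq]
  -- strict version converse: from ν i < ν (i+1) get ℓ i < ℓ (i+1) later.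
  -- the multipliers
  refine ⟨fun i => 3 * ζ * C ^ 3 * (ℓ i) ^ 2 / (τ ^ 2 * (η * h)), ?_, ?_, ?_⟩
  · -- monotone
    intro i hi
    have h1 := hmono i hi
    rw [Finset.mem_Icc] at hi
    have hiN : i ∈ Finset.Icc 1 N := Finset.mem_Icc.2 ⟨hi.1, by omega⟩
    have h0 : 0 ≤ ℓ i := (hnn _ hiN).1
    have hsq : (ℓ i) ^ 2 ≤ (ℓ (i + 1)) ^ 2 := pow_le_pow_left₀ h0 h1 2
    have hden : (0:ℝ) < τ ^ 2 * (η * h) := by positivity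
    show 3 * ζ * C ^ 3 * (ℓ i) ^ 2 / (τ ^ 2 * (η * h))
      ≤ 3 * ζ * C ^ 3 * (ℓ (i + 1)) ^ 2 / (τ ^ 2 * (η * h))
    apply (div_le_div_iff_of_pos_right hden).2
    have h3 : (0:ℝ) ≤ 3 * ζ * C ^ 3 := by positivity
    exact mul_le_mul_of_nonneg_left hsq h3
  · -- closed forms
    intro i hi
    have h0 : 0 ≤ ℓ i := (hnn i hi).1
    have hd0 : 0 ≤ d i := (hnn i hi).2
    constructor
    · -- ℓ formula
      have hν0 : (0:ℝ) ≤ 3 * ζ * C ^ 3 * (ℓ i) ^ 2 / (τ ^ 2 * (η * h)) := by positivity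
      rw [max_eq_left hν0]
      have harg : η * h * (3 * ζ * C ^ 3 * (ℓ i) ^ 2 / (τ ^ 2 * (η * h))) / (3 * ζ * C ^ 3)
          = (ℓ i / τ) ^ 2 := by
        field_simp
      rw [harg, Real.sqrt_sq (by positivity)]
      field_simp
    · -- d formula
      have hKν : 3 * ζ * C ^ 3 * (ℓ i) ^ 2 / (τ ^ 2 * (η * h)) * (B * η * h * g)
          / (σ2 * Real.log 2) = fd i / (σ2 * Real.log 2 / (g * B)) := by
        rw [hfd]
        field_simp
      rw [hKν]
      have hgd0pos : (0:ℝ) < σ2 * Real.log 2 / (g * B) := by positivity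
      rcases eq_or_lt_of_le hd0 with hdz | hdpos
      · -- d i = 0
        have hfle : fd i ≤ σ2 * Real.log 2 / (g * B) := by
          have := star1 i hi
          simp only [hgd] at this
          rw [← hdz] at this
          simpa using this
        have hmax : max (fd i / (σ2 * Real.log 2 / (g * B))) 1 = 1 := by
          rw [max_eq_right]
          rw [div_le_one hgd0pos]
          exact hfle
        rw [hmax, Real.logb_one, mul_zero, ← hdz]
      · -- d i > 0
        have heqd : fd i = gd i := le_antisymm (star1 i hi) (star2 i hi hdpos)
        have hfrac : fd i / (σ2 * Real.log 2 / (g * B)) = (2:ℝ) ^ (d i / (τ * B)) := by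
          rw [heqd, hgd]
          field_simp
        rw [hfrac]
        have hone : (1:ℝ) ≤ (2:ℝ) ^ (d i / (τ * B)) := by
          rw [show (1:ℝ) = (2:ℝ) ^ (0:ℝ) by simp]
          exact Real.rpow_le_rpow_of_exponent_le one_le_two (by positivity)
        rw [max_eq_left hone, Real.logb_rpow (by norm_num) (by norm_num)]
        field_simp
  · -- tightness
    intro i hi hν
    have hiIcc := hi
    rw [Finset.mem_Icc] at hi
    have hiN : i ∈ Finset.Icc 1 N := Finset.mem_Icc.2 ⟨hi.1, by omega⟩
    have hi1N : i + 1 ∈ Finset.Icc 1 N := Finset.mem_Icc.2 ⟨by omega, by omega⟩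
    have h0 : 0 ≤ ℓ i := (hnn _ hiN).1
    have h0' : 0 ≤ ℓ (i + 1) := (hnn _ hi1N).1
    have hlt : ℓ i < ℓ (i + 1) := by
      by_contra hcc
      push_neg at hcc
      have hsq : (ℓ (i + 1)) ^ 2 ≤ (ℓ i) ^ 2 := pow_le_pow_left₀ h0' hcc 2
      have hden : (0:ℝ) < τ ^ 2 * (η * h) := by positivity
      have h3 : (0:ℝ) ≤ 3 * ζ * C ^ 3 := by positivity
      have h9 : 3 * ζ * C ^ 3 * (ℓ (i + 1)) ^ 2 / (τ ^ 2 * (η * h))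
          ≤ 3 * ζ * C ^ 3 * (ℓ i) ^ 2 / (τ ^ 2 * (η * h)) :=
        (div_le_div_iff_of_pos_right hden).2 (mul_le_mul_of_nonneg_left hsq h3)
      have hν' : 3 * ζ * C ^ 3 * (ℓ i) ^ 2 / (τ ^ 2 * (η * h))
          < 3 * ζ * C ^ 3 * (ℓ (i + 1)) ^ 2 / (τ ^ 2 * (η * h)) := hν
      linarith
    by_contra hne
    have hslack : ∑ j ∈ Finset.Icc 1 i, (ℓ j + d j) < ∑ j ∈ Finset.Icc 1 i, A j :=
      lt_of_le_of_ne (hcaus i hiIcc) hne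
    set a := ℓ i with ha
    set b := ℓ (i + 1) with hb
    set s := (∑ j ∈ Finset.Icc 1 i, A j) - ∑ j ∈ Finset.Icc 1 i, (ℓ j + d j) with hs
    have hspos : 0 < s := by rw [hs]; linarith
    set ε := min ((b - a) / 2) s with hε
    have hεpos : 0 < ε := lt_min (by linarith) hspos
    have hεle : ε ≤ (b - a) / 2 := min_le_left _ _
    have hεs : ε ≤ s := min_le_right _ _
    have hk := key2 i hiIcc ε (by rw [← ha]; linarith) (by rw [← hb]; linarith)
      (by rw [hs] at hεs; linarith)
    rw [← ha, ← hb] at hk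
    have hkey : a ^ 3 + b ^ 3 ≤ (a + ε) ^ 3 + (b - ε) ^ 3 := by
      have hc : (0:ℝ) < ζ * C ^ 3 / τ ^ 2 := by positivity
      have : ζ * C ^ 3 / τ ^ 2 * (a ^ 3 + b ^ 3)
          ≤ ζ * C ^ 3 / τ ^ 2 * ((a + ε) ^ 3 + (b - ε) ^ 3) := by
        simp only [Eloc] at hk
        ring_nf at hk ⊢
        linarith
      exact (mul_le_mul_iff_right₀ hc).mp this
    have hsum : 0 < a + b := by linarith
    have hdiff : 0 < b - a - ε := by linarith
    nlinarith [mul_pos (mul_pos hεpos hsum) hdiff]
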